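/- Let Ω ⊆ ℂⁿ be an unbounded strongly convex domain, h : ∂Ω → [0, ∞) continuous, and Φ the maximal solution of the Bremermann–Dirichlet problem for (Ω, h). Then Φ is continuous at every point of ∂Ω. -/

import Mathlib

open Filter Metric Set Topology

noncomputable section

abbrev Cn (n : ℕ) := EuclideanSpace ℂ (Fin n)

/-- A real-valued function is plurisubharmonic on an open set `U ⊆ ℂⁿ` if it is
upper semicontinuous on `U` and satisfies the sub-mean value inequality on every
complex line (over circles whose closed disc stays inside `U`). -/
def PSHOn {n : ℕ} (u : Cn n → ℝ) (U : Set (Cn n)) : Prop :=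
  UpperSemicontinuousOn u U ∧
    ∀ z ∈ U, ∀ v : Cn n, ∀ r : ℝ, 0 < r →
      (∀ t : ℂ, ‖t‖ ≤ r → z + t • v ∈ U) →
      u z ≤ (1 / (2 * Real.pi)) *
        ∫ θ in (0:ℝ)..(2 * Real.pi),
          u (z + (((r : ℂ) * Complex.exp ((θ : ℂ) * Complex.I)) • v))

/-- The Perron–Bremermann class of `Ω` and boundary data `h`. -/
def PBClass {n : ℕ} (Ω : Set (Cn n)) (h : Cn n → ℝ) : Set (Cn n → ℝ) :=
  {u | UpperSemicontinuousOn u (closure Ω) ∧ PSHOn u Ω ∧ ∀ z ∈ frontier Ω, u z ≤ h z}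

/-- The Perron–Bremermann function: the upper semicontinuous regularization (limsup)
of the upper envelope of the Perron–Bremermann class. -/
def perronBremermann {n : ℕ} (Ω : Set (Cn n)) (h : Cn n → ℝ) : Cn n → ℝ :=
  fun z => limsup (fun w => sSup ((fun u : Cn n → ℝ => u w) '' PBClass Ω h)) (𝓝 z)

/-- `ρ` is strongly plurisubharmonic on `U`. -/
def StronglyPSHOn {n : ℕ} (ρ : Cn n → ℝ) (U : Set (Cn n)) : Prop :=
  ∀ z ∈ U, ∃ ε > (0:ℝ), ∃ r > (0:ℝ), ball z r ⊆ U ∧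
    PSHOn (fun w => ρ w - ε * ‖w‖ ^ 2) (ball z r)

/-- `ρ` is strongly convex on `U`. -/
def StronglyConvexFnOn {n : ℕ} (ρ : Cn n → ℝ) (U : Set (Cn n)) : Prop :=
  ∀ z ∈ U, ∃ ε > (0:ℝ), ∃ r > (0:ℝ), ball z r ⊆ U ∧
    ConvexOn ℝ (ball z r) (fun w => ρ w - ε * ‖w‖ ^ 2)

/-- A domain with `C²` boundary: near each boundary point there is a `C²` local
defining function with nonvanishing differential on the boundary. -/
def HasC2Boundary {n : ℕ} (Ω : Set (Cn n)) : Prop :=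
  ∀ p ∈ frontier Ω, ∃ U ∈ 𝓝 p, ∃ ρ : Cn n → ℝ,
    ContDiffOn ℝ 2 ρ U ∧ (∀ z ∈ U, (z ∈ Ω ↔ ρ z < 0)) ∧
    ∀ z ∈ U ∩ frontier Ω, fderiv ℝ ρ z ≠ 0

/-- A strongly pseudoconvex domain: an open connected set which near each boundary
point admits a `C²` strongly plurisubharmonic local defining function with
nonvanishing differential. -/
def IsStronglyPseudoconvexDomain {n : ℕ} (Ω : Set (Cn n)) : Prop :=
  IsOpen Ω ∧ IsConnected Ω ∧
    ∀ p ∈ frontier Ω, ∃ U ∈ 𝓝 p, ∃ ρ : Cn n → ℝ,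
      ContDiffOn ℝ 2 ρ U ∧ (∀ z ∈ U, (z ∈ Ω ↔ ρ z < 0)) ∧
      (∀ z ∈ U ∩ frontier Ω, fderiv ℝ ρ z ≠ 0) ∧ StronglyPSHOn ρ U

/-- A strongly convex domain: an open connected convex set which near each boundary
point admits a `C²` strongly convex local defining function with nonvanishing
differential. -/
def IsStronglyConvexDomain {n : ℕ} (Ω : Set (Cn n)) : Prop :=
  IsOpen Ω ∧ IsConnected Ω ∧ Convex ℝ Ω ∧
    ∀ p ∈ frontier Ω, ∃ U ∈ 𝓝 p, ∃ ρ : Cn n → ℝ,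
      ContDiffOn ℝ 2 ρ U ∧ (∀ z ∈ U, (z ∈ Ω ↔ ρ z < 0)) ∧
      (∀ z ∈ U ∩ frontier Ω, fderiv ℝ ρ z ≠ 0) ∧ StronglyConvexFnOn ρ U

/-- A solution of the Bremermann–Dirichlet problem (⋆) for `(Ω, h)`. -/
def IsBDSolution {n : ℕ} (Ω : Set (Cn n)) (h u : Cn n → ℝ) : Prop :=
  UpperSemicontinuousOn u (closure Ω) ∧ PSHOn u Ω ∧ ∀ z ∈ frontier Ω, u z = h z

/-- A maximal solution of the Bremermann–Dirichlet problem (⋆) for `(Ω, h)`. -/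
def IsMaximalBDSolution {n : ℕ} (Ω : Set (Cn n)) (h u : Cn n → ℝ) : Prop :=
  IsBDSolution Ω h u ∧ ∀ u', IsBDSolution Ω h u' → ∀ z ∈ closure Ω, u' z ≤ u z



lemma smul_decomp {n : ℕ} (t : ℂ) (v : Cn n) :
    t • v = t.re • v + t.im • (Complex.I • v) := by
  calc t • v = ((t.re : ℂ) + (t.im : ℂ) * Complex.I) • v := by rw [Complex.re_add_im]
  _ = (t.re : ℂ) • v + ((t.im : ℂ) * Complex.I) • v := add_smul _ _ _
  _ = t.re • v + t.im • (Complex.I • v) := by rw [mul_smul, Complex.coe_smul, Complex.coe_smul]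

lemma clm_circle {n : ℕ} (f : Cn n →L[ℝ] ℝ) (z v : Cn n) (r θ : ℝ) :
    f (z + (((r : ℂ) * Complex.exp ((θ : ℂ) * Complex.I)) • v))
      = f z + (r * Real.cos θ) * f v + (r * Real.sin θ) * f (Complex.I • v) := by
  have hre : ((r : ℂ) * Complex.exp ((θ : ℂ) * Complex.I)).re = r * Real.cos θ := by
    simp [Complex.mul_re, Complex.exp_ofReal_mul_I_re, Complex.exp_ofReal_mul_I_im]
  have him : ((r : ℂ) * Complex.exp ((θ : ℂ) * Complex.I)).im = r * Real.sin θ := by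
    simp [Complex.mul_im, Complex.exp_ofReal_mul_I_re, Complex.exp_ofReal_mul_I_im]
  rw [map_add, smul_decomp, map_add, map_smul, map_smul, hre, him, smul_eq_mul, smul_eq_mul]
  ring

lemma integral_circle_affine {n : ℕ} (f : Cn n →L[ℝ] ℝ) (a C : ℝ) (z v : Cn n) (r : ℝ) :
    (∫ θ in (0:ℝ)..(2 * Real.pi),
        (a + C * f (z + (((r : ℂ) * Complex.exp ((θ : ℂ) * Complex.I)) • v))))
      = 2 * Real.pi * (a + C * f z) := by
  have h1 : ∀ θ : ℝ, a + C * f (z + (((r : ℂ) * Complex.exp ((θ : ℂ) * Complex.I)) • v))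
      = (a + C * f z) + ((C * r * f v) * Real.cos θ + (C * r * f (Complex.I • v)) * Real.sin θ) := by
    intro θ; rw [clm_circle]; ring
  simp only [h1]
  rw [intervalIntegral.integral_add (intervalIntegrable_const)
      ((by fun_prop : Continuous (fun θ : ℝ => C * r * f v * Real.cos θ
        + C * r * f (Complex.I • v) * Real.sin θ)).intervalIntegrable _ _),
    intervalIntegral.integral_add
      ((by fun_prop : Continuous (fun θ : ℝ => C * r * f v * Real.cos θ)).intervalIntegrable _ _)
      ((by fun_prop : Continuous (fun θ : ℝ => C * r * f (Complex.I • v) * Real.sin θ)).intervalIntegrable _ _),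
    intervalIntegral.integral_const, intervalIntegral.integral_const_mul,
    intervalIntegral.integral_const_mul, integral_cos, integral_sin]
  simp [Real.sin_two_pi, Real.cos_two_pi]


section Aux2
variable {n : ℕ}

lemma uscWithinAt_max {α : Type*} [TopologicalSpace α] {f g : α → ℝ} {s : Set α} {x : α}
    (hf : UpperSemicontinuousWithinAt f s x) (hg : UpperSemicontinuousWithinAt g s x) :
    UpperSemicontinuousWithinAt (fun y => max (f y) (g y)) s x := by
  intro y hy
  have h1 := hf y (lt_of_le_of_lt (le_max_left _ _) hy)
  have h2 := hg y (lt_of_le_of_lt (le_max_right _ _) hy)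
  filter_upwards [h1, h2] with w hw1 hw2 using max_lt hw1 hw2

lemma usc_bddAbove {f : ℝ → ℝ} {K : Set ℝ} (hK : IsCompact K)
    (hf : ∀ x ∈ K, UpperSemicontinuousAt f x) : ∃ B, ∀ x ∈ K, f x ≤ B := by
  obtain ⟨s, hsK, hcov⟩ := hK.elim_nhds_subcover (fun x => {y | f y < f x + 1})
    (fun x hx => hf x hx (f x + 1) (lt_add_one _))
  rcases s.eq_empty_or_nonempty with rfl | hs
  · exact ⟨0, fun x hx => absurd (hcov hx) (by simp)⟩
  · refine ⟨s.sup' hs (fun x => f x + 1), fun x hx => ?_⟩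
    obtain ⟨i, hi, hfi⟩ : ∃ i ∈ s, f x < f i + 1 := by
      simpa using hcov hx
    exact le_trans hfi.le (Finset.le_sup' (fun x => f x + 1) hi)

lemma barrier_PSH (f : Cn n →L[ℝ] ℝ) (a C : ℝ) (U : Set (Cn n)) :
    PSHOn (fun w => a + C * f w) U := by
  constructor
  · exact ((continuous_const.add (continuous_const.mul
      f.continuous)).upperSemicontinuous).upperSemicontinuousOn _
  · intro z _ v r hr _
    rw [integral_circle_affine]
    have hπ : (0:ℝ) < 2 * Real.pi := by positivity
    rw [one_div, inv_mul_cancel_left₀ (ne_of_gt hπ)]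

end Aux2

section Aux3
variable {n : ℕ}

lemma barrier_le_maximal {Ω : Set (Cn n)} (hopen : IsOpen Ω) {h Φ : Cn n → ℝ}
    (hnn : ∀ z ∈ frontier Ω, 0 ≤ h z) (hΦ : IsMaximalBDSolution Ω h Φ)
    (f : Cn n →L[ℝ] ℝ) (a C : ℝ)
    (hbd : ∀ z ∈ frontier Ω, a + C * f z ≤ h z) :
    ∀ z ∈ closure Ω, a + C * f z ≤ Φ z := by
  set u : Cn n → ℝ := fun w => a + C * f w with hu_def
  have hu_cont : Continuous u := continuous_const.add (continuous_const.mul f.continuous)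
  set g : Cn n → ℝ := fun w => max (u w) 0 with hg_def
  have hg_cont : Continuous g := hu_cont.max continuous_const
  set m : Cn n → ℝ := fun w => max (Φ w) (g w) with hm_def
  have hm_usc : UpperSemicontinuousOn m (closure Ω) := fun x hx =>
    uscWithinAt_max (hΦ.1.1 x hx) ((hg_cont.upperSemicontinuous).upperSemicontinuousOn _ x hx)
  have hm_sol : IsBDSolution Ω h m := by
    refine ⟨hm_usc, ⟨hm_usc.mono subset_closure, ?_⟩, ?_⟩
    · -- mean value inequality
      intro z hz v r hr hdisc
      set γ : ℝ → Cn n := fun θ => z + (((r : ℂ) * Complex.exp ((θ : ℂ) * Complex.I)) • v)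
        with hγ_def
      have hγmem : ∀ θ : ℝ, γ θ ∈ Ω := by
        intro θ
        apply hdisc
        have : ‖Complex.exp ((θ:ℂ) * Complex.I)‖ = 1 := by
          rw [Complex.norm_exp_ofReal_mul_I]
        rw [norm_mul, this, mul_one, Complex.norm_real, Real.norm_eq_abs, abs_of_pos hr]
      have hγcont : Continuous γ := by
        apply continuous_const.add
        fun_prop
      have hΦusc : UpperSemicontinuous (fun θ => Φ (γ θ)) := by
        intro θ y hy
        have h1 : UpperSemicontinuousWithinAt Φ Ω (γ θ) := hΦ.1.2.1.1 _ (hγmem θ)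
        have hnw : 𝓝[Ω] (γ θ) = 𝓝 (γ θ) := nhdsWithin_eq_nhds.mpr (hopen.mem_nhds (hγmem θ))
        have h2 : ∀ᶠ w in 𝓝 (γ θ), Φ w < y := by rw [← hnw]; exact h1 y hy
        exact hγcont.continuousAt.eventually h2
      have hΦmeas : Measurable (fun θ => Φ (γ θ)) := hΦusc.measurable
      obtain ⟨B, hB⟩ := usc_bddAbove isCompact_Icc
        (fun x (_ : x ∈ Icc (0:ℝ) (2*Real.pi)) => hΦusc x)
      obtain ⟨B2, hB2⟩ := usc_bddAbove (f := fun θ => g (γ θ)) isCompact_Icc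
        (fun x _ => ((hg_cont.comp hγcont).upperSemicontinuous) x)
      have h2π : (0:ℝ) ≤ 2 * Real.pi := by positivity
      -- integrability of m ∘ γ
      have hmγ_meas : Measurable (fun θ => m (γ θ)) :=
        hΦmeas.max (hg_cont.comp hγcont).measurable
      have hm_nonneg : ∀ θ : ℝ, 0 ≤ m (γ θ) := fun θ =>
        le_trans (le_max_right (u (γ θ)) 0) (le_max_right _ _)
      have hm_int : IntervalIntegrable (fun θ => m (γ θ)) MeasureTheory.volume 0 (2*Real.pi) := by
        rw [intervalIntegrable_iff]
        haveI : Fact (MeasureTheory.volume (Set.uIoc (0:ℝ) (2*Real.pi)) < ⊤) := by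
          constructor
          rw [Set.uIoc_of_le h2π, Real.volume_Ioc]
          exact ENNReal.ofReal_lt_top
        refine ⟨hmγ_meas.aestronglyMeasurable, ?_⟩
        apply MeasureTheory.HasFiniteIntegral.of_bounded
          (C := max (max B B2) 0)
        apply MeasureTheory.ae_restrict_of_forall_mem measurableSet_uIoc
        intro θ hθ
        have hθ' : θ ∈ Icc (0:ℝ) (2*Real.pi) := by
          rw [Set.uIoc_of_le h2π] at hθ; exact Ioc_subset_Icc_self hθ
        rw [Real.norm_eq_abs, abs_of_nonneg (hm_nonneg θ)]
        have : m (γ θ) ≤ max B B2 := max_le (le_trans (hB θ hθ') (le_max_left _ _))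
          (le_trans (hB2 θ hθ') (le_max_right _ _))
        exact le_trans this (le_max_left _ _)
      have hu_int : IntervalIntegrable (fun θ => u (γ θ)) MeasureTheory.volume 0 (2*Real.pi) :=
        (hu_cont.comp hγcont).intervalIntegrable _ _
      have hle_m : ∀ θ : ℝ, u (γ θ) ≤ m (γ θ) := fun θ =>
        le_trans (le_max_left (u (γ θ)) 0) (le_max_right _ _)
      have hfrac : (0:ℝ) ≤ 1 / (2 * Real.pi) := by positivity
      have hint_nonneg : (0:ℝ) ≤ ∫ θ in (0:ℝ)..(2*Real.pi), m (γ θ) :=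
        intervalIntegral.integral_nonneg h2π (fun θ _ => hm_nonneg θ)
      -- u z ≤ average of m
      have hAz : u z ≤ (1 / (2 * Real.pi)) * ∫ θ in (0:ℝ)..(2*Real.pi), m (γ θ) := by
        have he : (∫ θ in (0:ℝ)..(2*Real.pi), u (γ θ)) = 2 * Real.pi * u z :=
          integral_circle_affine f a C z v r
        have hmono : (∫ θ in (0:ℝ)..(2*Real.pi), u (γ θ))
            ≤ ∫ θ in (0:ℝ)..(2*Real.pi), m (γ θ) :=
          intervalIntegral.integral_mono_on h2π hu_int hm_int (fun θ _ => hle_m θ)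
        rw [he] at hmono
        have hπ : (0:ℝ) < 2 * Real.pi := by positivity
        calc u z = (1 / (2 * Real.pi)) * (2 * Real.pi * u z) := by
              field_simp
          _ ≤ (1 / (2 * Real.pi)) * ∫ θ in (0:ℝ)..(2*Real.pi), m (γ θ) := by
              apply mul_le_mul_of_nonneg_left hmono hfrac
      -- Φ z ≤ average of m
      have hBz : Φ z ≤ (1 / (2 * Real.pi)) * ∫ θ in (0:ℝ)..(2*Real.pi), m (γ θ) := by
        by_cases hint : IntervalIntegrable (fun θ => Φ (γ θ)) MeasureTheory.volume 0 (2*Real.pi)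
        · have h0 := hΦ.1.2.1.2 z hz v r hr hdisc
          have hmono : (∫ θ in (0:ℝ)..(2*Real.pi), Φ (γ θ))
              ≤ ∫ θ in (0:ℝ)..(2*Real.pi), m (γ θ) :=
            intervalIntegral.integral_mono_on h2π hint hm_int
              (fun θ _ => le_max_left _ _)
          exact le_trans h0 (mul_le_mul_of_nonneg_left hmono hfrac)
        · have h0 := hΦ.1.2.1.2 z hz v r hr hdisc
          rw [intervalIntegral.integral_undef hint] at h0
          simp only [mul_zero] at h0
          exact le_trans h0 (mul_nonneg hfrac hint_nonneg)
      have hCz : (0:ℝ) ≤ (1 / (2 * Real.pi)) * ∫ θ in (0:ℝ)..(2*Real.pi), m (γ θ) :=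
        mul_nonneg hfrac hint_nonneg
      exact max_le hBz (max_le hAz hCz)
    · -- boundary values
      intro zb hzb
      have h1 : Φ zb = h zb := hΦ.1.2.2 zb hzb
      have h2 : g zb ≤ h zb := max_le (hbd zb hzb) (hnn zb hzb)
      simp only [hm_def, h1]
      exact max_eq_left h2
  intro z hz
  exact le_trans (le_trans (le_max_left (u z) 0) (le_max_right (Φ z) (g z)))
    (hΦ.2 m hm_sol z hz)

end Aux3

section Aux4
variable {n : ℕ}

lemma exists_support {Ω : Set (Cn n)} (hΩ : IsStronglyConvexDomain Ω) {ζ : Cn n}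
    (hζ : ζ ∈ frontier Ω) :
    ∃ f : Cn n →L[ℝ] ℝ, ∃ r₀ > (0:ℝ), (∀ z ∈ Ω, f z < f ζ) ∧ (∀ z ∈ closure Ω, f z ≤ f ζ) ∧
      (∀ z ∈ closure Ω, z ≠ ζ → ‖z - ζ‖ < r₀ → f z < f ζ) := by
  obtain ⟨hopen, hconn, hconv, hbdy⟩ := hΩ
  obtain ⟨U, hU, ρ, hρC2, hρdef, -, hSC⟩ := hbdy ζ hζ
  obtain ⟨ε, hε, rs, hrs, hball, hcvx⟩ := hSC ζ (mem_of_mem_nhds hU)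
  have hζcl : ζ ∈ closure Ω := frontier_subset_closure hζ
  have hζΩ : ζ ∉ Ω := by
    intro hmem
    exact (hopen.frontier_eq ▸ hζ).2 hmem
  obtain ⟨f, hf⟩ := geometric_hahn_banach_open_point hconv hopen hζΩ
  have hle : ∀ z ∈ closure Ω, f z ≤ f ζ := by
    have : closure Ω ⊆ {z | f z ≤ f ζ} :=
      closure_minimal (fun z hz => (hf z hz).le) (isClosed_le f.continuous continuous_const)
    exact fun z hz => this hz
  -- ρ is ≤ 0 at points of the closure inside the ball
  have hρle : ∀ p ∈ closure Ω, p ∈ ball ζ rs → ρ p ≤ 0 := by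
    intro p hp hpb
    by_contra hpos
    push_neg at hpos
    have hcont : ContinuousAt ρ p :=
      hρC2.continuousOn.continuousAt (mem_nhds_iff.mpr ⟨ball ζ rs, hball, isOpen_ball, hpb⟩)
    have ht : {w | 0 < ρ w} ∈ 𝓝 p := hcont.preimage_mem_nhds (Ioi_mem_nhds hpos)
    have htb : ({w | 0 < ρ w} ∩ ball ζ rs) ∈ 𝓝 p :=
      Filter.inter_mem ht (isOpen_ball.mem_nhds hpb)
    obtain ⟨q, hq1, hq2⟩ := mem_closure_iff_nhds.mp hp _ htb
    have h4 : ρ q < 0 := (hρdef q (hball hq1.2)).mp hq2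
    have h5 : 0 < ρ q := hq1.1
    linarith
  refine ⟨f, rs, hrs, hf, hle, ?_⟩
  intro z hzc hzne hzr
  by_contra hcon
  have hfz : f z = f ζ := le_antisymm (hle z hzc) (not_lt.mp hcon)
  have hzΩ : z ∉ Ω := fun hmem => absurd (hf z hmem) (by rw [hfz]; exact lt_irrefl _)
  set m : Cn n := (1/2 : ℝ) • ζ + (1/2 : ℝ) • z with hm_def
  have hmcl : m ∈ closure Ω :=
    hconv.closure hζcl hzc (by norm_num) (by norm_num) (by norm_num)
  have hmsub : m - ζ = (1/2 : ℝ) • (z - ζ) := by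
    rw [hm_def]; module
  have hz_ball : z ∈ ball ζ rs := by
    rw [mem_ball, dist_eq_norm]; exact hzr
  have hζ_ball : ζ ∈ ball ζ rs := mem_ball_self hrs
  have hm_ball : m ∈ ball ζ rs := by
    rw [mem_ball, dist_eq_norm, hmsub, norm_smul]
    have : ‖z - ζ‖ < rs := hzr
    rw [Real.norm_eq_abs]
    rw [abs_of_pos (by norm_num : (0:ℝ) < 1/2)]
    nlinarith [norm_nonneg (z - ζ)]
  have hfm : f m = f ζ := by
    rw [hm_def, map_add, map_smul, map_smul, hfz]; simp only [smul_eq_mul]; ring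
  have hmΩ : m ∉ Ω := fun hmem => absurd (hf m hmem) (by rw [hfm]; exact lt_irrefl _)
  -- strict convexity contradiction
  have hρζ : ρ ζ ≤ 0 := hρle ζ hζcl hζ_ball
  have hρz : ρ z ≤ 0 := hρle z hzc hz_ball
  have hρm : 0 ≤ ρ m := by
    by_contra hneg
    push_neg at hneg
    exact hmΩ ((hρdef m (hball hm_ball)).mpr hneg)
  have hconvineq := hcvx.2 hζ_ball hz_ball (by norm_num : (0:ℝ) ≤ 1/2)
    (by norm_num : (0:ℝ) ≤ 1/2) (by norm_num : (1/2 : ℝ) + 1/2 = 1)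
  simp only [smul_eq_mul] at hconvineq
  have hpar := parallelogram_law_with_norm ℂ ζ z
  have hmnorm : ‖m‖ = (1/2 : ℝ) * ‖ζ + z‖ := by
    have : m = (1/2 : ℝ) • (ζ + z) := by rw [hm_def]; module
    rw [this, norm_smul, Real.norm_eq_abs, abs_of_pos (by norm_num : (0:ℝ) < 1/2)]
  have hsubpos : 0 < ‖ζ - z‖ := by
    rw [norm_pos_iff, sub_ne_zero]
    exact fun hh => hzne hh.symm
  have hρmneg : ρ m < 0 := by
    have h1 : ρ m - ε * ‖m‖^2 ≤ 1/2 * (ρ ζ - ε * ‖ζ‖^2) + 1/2 * (ρ z - ε * ‖z‖^2) := hconvineq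
    have hm2 : ‖m‖^2 = 1/4 * (‖ζ + z‖ * ‖ζ + z‖) := by rw [hmnorm]; ring
    nlinarith [h1, hm2, hpar, hρζ, hρz, mul_pos hε (mul_pos hsubpos hsubpos)]
  linarith
end Aux4

section Aux5
variable {n : ℕ}

lemma exists_far_bound {Ω : Set (Cn n)} (hconv : Convex ℝ Ω) {ζ : Cn n}
    (hζcl : ζ ∈ closure Ω) (f : Cn n →L[ℝ] ℝ)
    (hle : ∀ z ∈ closure Ω, f z ≤ f ζ) {r₀ : ℝ}
    (hstrict : ∀ z ∈ closure Ω, z ≠ ζ → ‖z - ζ‖ < r₀ → f z < f ζ)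
    {r : ℝ} (hr : 0 < r) (hrr : r < r₀) :
    ∃ c > (0:ℝ), ∀ z ∈ closure Ω, r ≤ ‖z - ζ‖ → f z ≤ f ζ - c := by
  set K : Set (Cn n) := closure Ω ∩ sphere ζ r with hK_def
  have hKc : IsCompact K := (isCompact_sphere ζ r).inter_left isClosed_closure
  have key : ∀ z ∈ closure Ω, r ≤ ‖z - ζ‖ → ∃ w ∈ K, f ζ - f w ≤ f ζ - f z := by
    intro z hz hR
    set R : ℝ := ‖z - ζ‖ with hR_def
    have hR0 : 0 < R := lt_of_lt_of_le hr hR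
    set a : ℝ := r / R with ha_def
    have ha0 : 0 ≤ a := le_of_lt (div_pos hr hR0)
    have ha1 : a ≤ 1 := (div_le_one hR0).mpr hR
    set w : Cn n := (1 - a) • ζ + a • z with hw_def
    have hwcl : w ∈ closure Ω :=
      hconv.closure hζcl hz (by linarith) ha0 (by ring)
    have hwsub : w - ζ = a • (z - ζ) := by rw [hw_def]; module
    have hwsphere : w ∈ sphere ζ r := by
      rw [mem_sphere_iff_norm, hwsub, norm_smul, Real.norm_eq_abs, abs_of_nonneg ha0,
        ← hR_def, ha_def]
      field_simp
    have hfw : f ζ - f w = a * (f ζ - f z) := by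
      rw [hw_def, map_add, map_smul, map_smul]
      simp only [smul_eq_mul]
      ring
    refine ⟨w, ⟨hwcl, hwsphere⟩, ?_⟩
    rw [hfw]
    have hd : 0 ≤ f ζ - f z := by linarith [hle z hz]
    nlinarith
  by_cases hK : K.Nonempty
  · obtain ⟨w₀, hw₀K, hmin⟩ := hKc.exists_isMinOn hK
      ((continuous_const.sub f.continuous).continuousOn)
    have hw₀ne : w₀ ≠ ζ := by
      intro hh
      have := hw₀K.2
      rw [mem_sphere_iff_norm, hh, sub_self, norm_zero] at this
      exact absurd this.symm (ne_of_gt hr)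
    have hw₀r : ‖w₀ - ζ‖ < r₀ := by
      have := hw₀K.2
      rw [mem_sphere_iff_norm] at this
      rw [this]; exact hrr
    have hc0 : 0 < f ζ - f w₀ := by
      have := hstrict w₀ hw₀K.1 hw₀ne hw₀r
      linarith
    refine ⟨f ζ - f w₀, hc0, ?_⟩
    intro z hz hR
    obtain ⟨w, hwK, hwle⟩ := key z hz hR
    have := hmin hwK
    simp only [Set.mem_setOf_eq] at this
    have h2 : f ζ - f w₀ ≤ f ζ - f w := this
    linarith
  · refine ⟨1, one_pos, ?_⟩
    intro z hz hR
    obtain ⟨w, hwK, -⟩ := key z hz hR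
    exact absurd ⟨w, hwK⟩ hK

end Aux5

/-- the maximal solution is continuous at every boundary point. -/
theorem maximal_solution_continuous_at_boundary {n : ℕ} {Ω : Set (Cn n)}
    (hΩ : IsStronglyConvexDomain Ω) (hub : ¬ Bornology.IsBounded Ω)
    {h : Cn n → ℝ} (hc : ContinuousOn h (frontier Ω))
    (hnn : ∀ z ∈ frontier Ω, 0 ≤ h z)
    {Φ : Cn n → ℝ} (hΦ : IsMaximalBDSolution Ω h Φ) :
    ∀ z ∈ frontier Ω, ContinuousWithinAt Φ (closure Ω) z := by
  intro ζ hζ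
  have hopen : IsOpen Ω := hΩ.1
  have hconv : Convex ℝ Ω := hΩ.2.2.1
  have hζcl : ζ ∈ closure Ω := frontier_subset_closure hζ
  have hΦζ : Φ ζ = h ζ := hΦ.1.2.2 ζ hζ
  have key : ∀ a : ℝ, a < Φ ζ → ∀ᶠ x in 𝓝[closure Ω] ζ, a < Φ x := by
    intro a ha
    set ε : ℝ := (Φ ζ - a) / 2 with hε_def
    have hε : 0 < ε := by rw [hε_def]; linarith
    have hcw : ContinuousWithinAt h (frontier Ω) ζ := hc ζ hζ
    rw [Metric.continuousWithinAt_iff] at hcw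
    obtain ⟨δ, hδ, hδh⟩ := hcw ε hε
    obtain ⟨f, r₀, hr₀, hflt, hfle, hstrict⟩ := exists_support hΩ hζ
    set r : ℝ := min r₀ δ / 2 with hr_def
    have hmin : 0 < min r₀ δ := lt_min hr₀ hδ
    have hr : 0 < r := by rw [hr_def]; linarith
    have hrr₀ : r < r₀ := by
      have h1 : min r₀ δ ≤ r₀ := min_le_left _ _
      rw [hr_def]; linarith
    have hrδ : r < δ := by
      have h1 : min r₀ δ ≤ δ := min_le_right _ _
      rw [hr_def]; linarith
    obtain ⟨c, hc0, hfar⟩ := exists_far_bound hconv hζcl f hfle hstrict hr hrr₀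
    set C : ℝ := h ζ / c with hC_def
    have hC0 : 0 ≤ C := div_nonneg (hnn ζ hζ) hc0.le
    set a0 : ℝ := h ζ - ε - C * f ζ with ha0_def
    have hbd : ∀ zb ∈ frontier Ω, a0 + C * f zb ≤ h zb := by
      intro zb hzb
      have hzbcl : zb ∈ closure Ω := frontier_subset_closure hzb
      by_cases hcase : ‖zb - ζ‖ < r
      · have h1 : dist zb ζ < δ := by rw [dist_eq_norm]; linarith
        have h2 := hδh hzb h1
        rw [Real.dist_eq] at h2
        have h2' := abs_lt.mp h2
        have h3 : h ζ - ε < h zb := by linarith [h2'.1]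
        have h4 : f zb ≤ f ζ := hfle zb hzbcl
        have h5 : 0 ≤ C * (f ζ - f zb) := mul_nonneg hC0 (by linarith)
        rw [ha0_def]; nlinarith
      · have h1 : r ≤ ‖zb - ζ‖ := not_lt.mp hcase
        have h2 := hfar zb hzbcl h1
        have h3 : C * c = h ζ := by rw [hC_def]; field_simp
        have h4 : 0 ≤ h zb := hnn zb hzb
        have h5 : C * c ≤ C * (f ζ - f zb) :=
          mul_le_mul_of_nonneg_left (by linarith) hC0
        rw [ha0_def]; nlinarith
    have hcomp := barrier_le_maximal hopen hnn hΦ f a0 C hbd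
    have huζ : a0 + C * f ζ = h ζ - ε := by rw [ha0_def]; ring
    have haζ : a < a0 + C * f ζ := by
      rw [huζ, ← hΦζ, hε_def]; linarith
    have hopen_set : {x : Cn n | a < a0 + C * f x} ∈ 𝓝 ζ := by
      have ho : IsOpen {x : Cn n | a < a0 + C * f x} :=
        isOpen_lt continuous_const (continuous_const.add (continuous_const.mul f.continuous))
      exact ho.mem_nhds haζ
    filter_upwards [self_mem_nhdsWithin, mem_nhdsWithin_of_mem_nhds hopen_set] with x hx1 hx2
    exact lt_of_lt_of_le hx2 (hcomp x hx1)
  have htd : Tendsto Φ (𝓝[closure Ω] ζ) (𝓝 (Φ ζ)) := by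
    rw [tendsto_order]
    exact ⟨key, fun b hb => hΦ.1.1 ζ hζcl b hb⟩
  exact htd
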